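/- arXiv:1911.11542 — 2 statements merged into one kernel-verified Lean document; each statement's English description precedes it below -/
import Mathlib

section
/- If α > 0, β ≥ 0, and L is symmetric positive semidefinite, then the matrix Ŵ ∈ ℝ^{K×M} defined by vec(Ŵ) = F_M^{-1} (I_M ⊗ Φᵀ) vec(T) is the unique global minimizer of the cost C(W) = Σ_{n=1}^N ‖t_n − Wᵀφ_n‖₂² + α‖W‖_F² + β Σ_{n=1}^N (Wᵀφ_n)ᵀ L (Wᵀφ_n) over W ∈ ℝ^{K×M}. -/
open Matrix Kronecker

/-- Column-stacking vectorization: for `W ∈ ℝ^{a×b}`, `vec W` is the vector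
indexed by `b × a` with `vec W (j, i) = W i j`. -/
def vec {a b : Type*} (W : Matrix a b ℝ) : b × a → ℝ := fun p => W p.2 p.1

private lemma pull3 {A B C : Type*} [Fintype A] [Fintype B] [Fintype C]
    (f : A → B → C → ℝ) :
    ∑ a, ∑ b, ∑ c, f a b c = ∑ c, ∑ a, ∑ b, f a b c :=
  (Finset.sum_congr rfl fun _ _ => Finset.sum_comm).trans Finset.sum_comm

private lemma pull4 {A B C D : Type*} [Fintype A] [Fintype B] [Fintype C] [Fintype D]
    (f : A → B → C → D → ℝ) :
    ∑ a, ∑ b, ∑ c, ∑ d, f a b c d = ∑ d, ∑ a, ∑ b, ∑ c, f a b c d :=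
  (Finset.sum_congr rfl fun _ _ => pull3 _).trans Finset.sum_comm

private lemma pull5 {A B C D E : Type*} [Fintype A] [Fintype B] [Fintype C] [Fintype D] [Fintype E]
    (f : A → B → C → D → E → ℝ) :
    ∑ a, ∑ b, ∑ c, ∑ d, ∑ e, f a b c d e = ∑ e, ∑ a, ∑ b, ∑ c, ∑ d, f a b c d e :=
  (Finset.sum_congr rfl fun _ _ => pull4 _).trans Finset.sum_comm

private lemma kron_quad {N K M : ℕ} (Φ : Matrix (Fin N) (Fin K) ℝ)
    (A : Matrix (Fin M) (Fin M) ℝ) (W : Matrix (Fin K) (Fin M) ℝ) :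
    _root_.vec W ⬝ᵥ (A ⊗ₖ (Φᵀ * Φ)).mulVec (_root_.vec W)
      = ∑ n, (fun m => (Φ * W) n m) ⬝ᵥ A.mulVec (fun m => (Φ * W) n m) := by
  simp only [dotProduct, Matrix.mulVec, Matrix.kroneckerMap_apply, Matrix.mul_apply,
    Matrix.transpose_apply, _root_.vec, Fintype.sum_prod_type, Finset.mul_sum, Finset.sum_mul]
  rw [pull5 (fun (m : Fin M) (k : Fin K) (m' : Fin M) (k' : Fin K) (n : Fin N) =>
    W k m * (A m m' * (Φ n k * Φ n k') * W k' m'))]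
  refine Finset.sum_congr rfl fun n _ => ?_
  refine Finset.sum_congr rfl fun m _ => ?_
  rw [Finset.sum_comm]
  refine Finset.sum_congr rfl fun m' _ => ?_
  rw [Finset.sum_comm]
  refine Finset.sum_congr rfl fun k _ => ?_
  refine Finset.sum_congr rfl fun k' _ => ?_
  ring

private lemma lin_term {N K M : ℕ} (Φ : Matrix (Fin N) (Fin K) ℝ)
    (T : Matrix (Fin N) (Fin M) ℝ) (W : Matrix (Fin K) (Fin M) ℝ) :
    (((1 : Matrix (Fin M) (Fin M) ℝ) ⊗ₖ Φᵀ).mulVec (_root_.vec T)) ⬝ᵥ _root_.vec W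
      = ∑ n, ∑ m, T n m * (Φ * W) n m := by
  simp only [dotProduct, Matrix.mulVec, Matrix.kroneckerMap_apply, Matrix.mul_apply,
    Matrix.transpose_apply, Matrix.one_apply, _root_.vec, Fintype.sum_prod_type,
    Finset.mul_sum, Finset.sum_mul, ite_mul, zero_mul, one_mul]
  conv_lhs => enter [2, m, 2, k]; rw [Finset.sum_comm]
  simp only [Finset.sum_ite_eq, Finset.mem_univ, if_true]
  rw [pull3 (fun (m : Fin M) (k : Fin K) (n : Fin N) => Φ n k * T n m * W k m)]
  refine Finset.sum_congr rfl fun n _ => ?_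
  refine Finset.sum_congr rfl fun m _ => ?_
  refine Finset.sum_congr rfl fun k _ => ?_
  ring

/-- If `α > 0`, `β ≥ 0`, and `L` is symmetric positive semidefinite, then
`Ŵ` defined by `vec Ŵ = F_M⁻¹ (I_M ⊗ Φᵀ) vec T` is the unique global
minimizer of the LRG cost
`C(W) = Σₙ ‖tₙ − Wᵀφₙ‖₂² + α‖W‖_F² + β Σₙ (Wᵀφₙ)ᵀ L (Wᵀφₙ)`. -/
theorem lrg_unique_minimizer (N K M : ℕ)
    (Φ : Matrix (Fin N) (Fin K) ℝ) (T : Matrix (Fin N) (Fin M) ℝ)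
    (α β : ℝ) (hα : 0 < α) (hβ : 0 ≤ β)
    (L : Matrix (Fin M) (Fin M) ℝ) (hL : L.PosSemidef)
    (F : Matrix (Fin M × Fin K) (Fin M × Fin K) ℝ)
    (hF : F = (1 + β • L) ⊗ₖ (Φᵀ * Φ) + α • 1)
    (C : Matrix (Fin K) (Fin M) ℝ → ℝ)
    (hC : ∀ W, C W = (∑ n, ∑ m, (T n m - Wᵀ.mulVec (Φ n) m) ^ 2)
        + α * (∑ k, ∑ m, (W k m) ^ 2)
        + β * ∑ n, Wᵀ.mulVec (Φ n) ⬝ᵥ L.mulVec (Wᵀ.mulVec (Φ n)))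
    (What : Matrix (Fin K) (Fin M) ℝ)
    (hWhat : _root_.vec What
      = F⁻¹.mulVec (((1 : Matrix (Fin M) (Fin M) ℝ) ⊗ₖ Φᵀ).mulVec (_root_.vec T))) :
    (∀ W, C What ≤ C W) ∧ (∀ W, C W = C What → W = What) := by
  -- notation
  set b : Fin M × Fin K → ℝ :=
    ((1 : Matrix (Fin M) (Fin M) ℝ) ⊗ₖ Φᵀ).mulVec (_root_.vec T) with hb_def
  -- rows of Φ * W
  have hGW : ∀ (W : Matrix (Fin K) (Fin M) ℝ) (n : Fin N),
      Wᵀ.mulVec (Φ n) = fun m => (Φ * W) n m := by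
    intro W n
    funext m
    simp [Matrix.mulVec, dotProduct, Matrix.mul_apply, Matrix.transpose_apply, mul_comm]
  -- quadratic form identity
  have quadA : ∀ W : Matrix (Fin K) (Fin M) ℝ,
      _root_.vec W ⬝ᵥ F.mulVec (_root_.vec W)
        = (∑ n, ∑ m, ((Φ * W) n m) ^ 2) + α * (∑ k, ∑ m, (W k m) ^ 2)
          + β * ∑ n, (fun m => (Φ * W) n m) ⬝ᵥ L.mulVec (fun m => (Φ * W) n m) := by
    intro W
    rw [hF, Matrix.add_mulVec, dotProduct_add, kron_quad]
    have h1 : _root_.vec W ⬝ᵥ (α • (1 : Matrix (Fin M × Fin K) (Fin M × Fin K) ℝ)).mulVec (_root_.vec W)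
        = α * (∑ k, ∑ m, (W k m) ^ 2) := by
      rw [Matrix.smul_mulVec, Matrix.one_mulVec, dotProduct_smul]
      have hvv : _root_.vec W ⬝ᵥ _root_.vec W = ∑ k, ∑ m, (W k m) ^ 2 := by
        simp only [dotProduct, _root_.vec, Fintype.sum_prod_type, pow_two]
        exact Finset.sum_comm
      rw [hvv, smul_eq_mul]
    rw [h1]
    have h2 : ∀ n : Fin N,
        (fun m => (Φ * W) n m) ⬝ᵥ ((1 : Matrix (Fin M) (Fin M) ℝ) + β • L).mulVec
            (fun m => (Φ * W) n m)
          = (∑ m, ((Φ * W) n m) ^ 2)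
            + β * ((fun m => (Φ * W) n m) ⬝ᵥ L.mulVec (fun m => (Φ * W) n m)) := by
      intro n
      rw [Matrix.add_mulVec, dotProduct_add, Matrix.smul_mulVec, dotProduct_smul,
        Matrix.one_mulVec]
      simp [dotProduct, sq, smul_eq_mul]
    simp only [h2]
    rw [Finset.sum_add_distrib, ← Finset.mul_sum]
    ring
  -- the cost as a quadratic function of _root_.vec W
  have CQ : ∀ W : Matrix (Fin K) (Fin M) ℝ,
      C W = _root_.vec W ⬝ᵥ F.mulVec (_root_.vec W) - 2 * (b ⬝ᵥ _root_.vec W) + (∑ n, ∑ m, (T n m) ^ 2) := by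
    intro W
    rw [hC, quadA]
    have hb : b ⬝ᵥ _root_.vec W = ∑ n, ∑ m, T n m * (Φ * W) n m := lin_term Φ T W
    rw [hb]
    simp only [hGW]
    have expand : ∑ n, ∑ m, (T n m - (Φ * W) n m) ^ 2
        = (∑ n, ∑ m, ((Φ * W) n m) ^ 2) - 2 * (∑ n, ∑ m, T n m * (Φ * W) n m)
          + (∑ n, ∑ m, (T n m) ^ 2) := by
      simp only [Finset.mul_sum, ← Finset.sum_sub_distrib, ← Finset.sum_add_distrib]
      refine Finset.sum_congr rfl fun n _ => Finset.sum_congr rfl fun m _ => ?_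
      ring
    rw [expand]
    ring
  -- symmetry of F
  have hFherm : F.IsHermitian := by
    have hLsym : ∀ i j, L i j = L j i := by
      intro i j
      have := congrFun (congrFun hL.1 j) i
      simpa [Matrix.conjTranspose_apply] using this
    rw [hF]
    ext p q
    simp only [Matrix.conjTranspose_apply, Matrix.add_apply, Matrix.kroneckerMap_apply,
      Matrix.mul_apply, Matrix.transpose_apply, Matrix.one_apply, Matrix.smul_apply,
      smul_eq_mul, star_trivial]
    rw [hLsym q.1 p.1]
    congr 1
    · congr 1
      · simp [eq_comm]
      · exact Finset.sum_congr rfl fun n _ => mul_comm _ _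
    · simp [eq_comm]
  have hFsymdot : ∀ u w : Fin M × Fin K → ℝ,
      u ⬝ᵥ F.mulVec w = w ⬝ᵥ F.mulVec u := by
    intro u w
    rw [Matrix.dotProduct_mulVec, ← Matrix.mulVec_transpose]
    have : Fᵀ = F := by
      have := hFherm
      rw [← Matrix.conjTranspose_eq_transpose_of_trivial]; exact this
    rw [this, dotProduct_comm]
  -- positivity of F
  have hstar : ∀ x : Fin M × Fin K → ℝ, star x = x := fun x => funext fun i => rfl
  have hFpos : ∀ x : Fin M × Fin K → ℝ, x ≠ 0 → 0 < x ⬝ᵥ F.mulVec x := by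
    intro x hx
    set D : Matrix (Fin K) (Fin M) ℝ := fun k m => x (m, k) with hD
    have hvD : _root_.vec D = x := funext fun p => rfl
    have hq := quadA D
    rw [hvD] at hq
    rw [hq]
    have t1 : 0 ≤ ∑ n, ∑ m, ((Φ * D) n m) ^ 2 :=
      Finset.sum_nonneg fun n _ => Finset.sum_nonneg fun m _ => sq_nonneg _
    have t3 : 0 ≤ β * ∑ n, (fun m => (Φ * D) n m) ⬝ᵥ L.mulVec (fun m => (Φ * D) n m) := by
      refine mul_nonneg hβ (Finset.sum_nonneg fun n _ => ?_)
      have := hL.dotProduct_mulVec_nonneg (fun m => (Φ * D) n m)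
      simpa using this
    have t2 : 0 < α * (∑ k, ∑ m, (D k m) ^ 2) := by
      refine mul_pos hα ?_
      obtain ⟨p, hp⟩ := Function.ne_iff.mp hx
      refine Finset.sum_pos' (fun k _ => Finset.sum_nonneg fun m _ => sq_nonneg _)
        ⟨p.2, Finset.mem_univ _, ?_⟩
      refine Finset.sum_pos' (fun m _ => sq_nonneg _) ⟨p.1, Finset.mem_univ _, ?_⟩
      have : D p.2 p.1 ≠ 0 := hp
      positivity
    linarith
  -- F is positive definite, hence invertible
  have hFpd : F.PosDef := by
    refine Matrix.PosDef.of_dotProduct_mulVec_pos hFherm fun x hx => ?_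
    simpa using hFpos x hx
  have hFunit : IsUnit F.det := by
    exact hFpd.det_pos.ne'.isUnit
  -- F _root_.vec(What) = b
  have hFW : F.mulVec (_root_.vec What) = b := by
    rw [hWhat, Matrix.mulVec_mulVec, Matrix.mul_nonsing_inv F hFunit, Matrix.one_mulVec]
  -- key comparison
  have key : ∀ W : Matrix (Fin K) (Fin M) ℝ,
      C W = (_root_.vec W - _root_.vec What) ⬝ᵥ F.mulVec (_root_.vec W - _root_.vec What) + C What := by
    intro W
    have e1 : (_root_.vec W - _root_.vec What) ⬝ᵥ F.mulVec (_root_.vec W - _root_.vec What)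
        = _root_.vec W ⬝ᵥ F.mulVec (_root_.vec W) - 2 * (b ⬝ᵥ _root_.vec W)
          - (_root_.vec What ⬝ᵥ F.mulVec (_root_.vec What) - 2 * (b ⬝ᵥ _root_.vec What)) := by
      rw [Matrix.mulVec_sub, sub_dotProduct, dotProduct_sub, dotProduct_sub]
      have hsd2 : ∀ u w : Fin M × Fin K → ℝ,
          u ⬝ᵥ F.mulVec w = (F.mulVec u) ⬝ᵥ w := fun u w => by
        rw [hFsymdot, dotProduct_comm]
      have e2 : _root_.vec What ⬝ᵥ F.mulVec (_root_.vec W) = b ⬝ᵥ _root_.vec W := by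
        rw [hsd2, hFW]
      have e3 : _root_.vec W ⬝ᵥ F.mulVec (_root_.vec What) = b ⬝ᵥ _root_.vec W := by
        rw [hFsymdot, hsd2, hFW]
      have e4 : _root_.vec What ⬝ᵥ F.mulVec (_root_.vec What) = b ⬝ᵥ _root_.vec What := by
        rw [hsd2, hFW]
      rw [e2, e3, e4]
      ring
    rw [CQ W, CQ What, e1]
    ring
  constructor
  · intro W
    rw [key W]
    rcases eq_or_ne (_root_.vec W - _root_.vec What) 0 with h | h
    · rw [h]
      simp
    · have := hFpos _ h
      linarith
  · intro W hCW
    rw [key W] at hCW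
    have h0 : (_root_.vec W - _root_.vec What) ⬝ᵥ F.mulVec (_root_.vec W - _root_.vec What) = 0 := by linarith
    by_contra hne
    have hd : _root_.vec W - _root_.vec What ≠ 0 := by
      intro h
      apply hne
      have : _root_.vec W = _root_.vec What := by
        have := sub_eq_zero.mp h
        exact this
      ext k m
      exact congrFun this (m, k)
    have := hFpos _ hd
    linarith
end

section
/- (Corollary 1) Assume α > 0. If the incoming node is disconnected, i.e., a = 0 ∈ ℝ^M, then the optimal LRG coefficients for the expanded graph satisfy vec(Ŵ_{M+1}) = [vec(Ŵ_M) ; (ΦᵀΦ + α I_K)^{-1} Φᵀ t̲]: the coefficients for the original M nodes are unchanged, and the coefficients for the new node equal the ridge-regression solution on its own data. -/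
open Matrix Kronecker

/-- The graph Laplacian `L = D − A` of a weighted adjacency matrix `A`,
where `D` is the diagonal matrix of row sums of `A`. -/
noncomputable def graphLaplacian {m : Type*} [Fintype m] [DecidableEq m]
    (A : Matrix m m ℝ) : Matrix m m ℝ :=
  Matrix.diagonal (fun i => ∑ j, A i j) - A

/-- Reindexing equivalence: the first `M` Kronecker blocks of size `K`
correspond to the original `M` nodes and the last block of size `K` to the
new node. -/
def blockEquiv (M K : ℕ) : (Fin M ⊕ Unit) × Fin K ≃ (Fin M × Fin K) ⊕ Fin K :=
  (Equiv.sumProdDistrib (Fin M) Unit (Fin K)).trans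
    ((Equiv.refl (Fin M × Fin K)).sumCongr (Equiv.punitProd (Fin K)))

lemma graphLaplacian_posSemidef {m : Type*} [Fintype m] [DecidableEq m]
    (A : Matrix m m ℝ) (hs : A.IsSymm) (hn : ∀ i j, 0 ≤ A i j) :
    (graphLaplacian A).PosSemidef := by
  rw [posSemidef_iff_dotProduct_mulVec]
  constructor
  · show _ = _
    ext i j
    have hA := hs.apply i j
    simp only [graphLaplacian, Matrix.conjTranspose_apply, star_trivial, Matrix.sub_apply,
      Matrix.diagonal_apply, hA]
    congr 1
    rcases eq_or_ne i j with h | h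
    · subst h; rfl
    · rw [if_neg h, if_neg (Ne.symm h)]
  · intro x
    have expand : star x ⬝ᵥ (graphLaplacian A) *ᵥ x
        = (∑ i, ∑ j, A i j * x i ^ 2) - ∑ i, ∑ j, A i j * (x i * x j) := by
      simp only [graphLaplacian, sub_mulVec, dotProduct_sub, star_trivial]
      congr 1
      · simp only [dotProduct, mulVec_diagonal]
        refine Finset.sum_congr rfl fun i _ => ?_
        rw [show x i * ((∑ j, A i j) * x i) = (∑ j, A i j) * x i ^ 2 by ring, Finset.sum_mul]
      · simp only [dotProduct, mulVec]
        refine Finset.sum_congr rfl fun i _ => ?_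
        rw [Finset.mul_sum]
        exact Finset.sum_congr rfl fun j _ => by ring
    have hswap : ∑ i, ∑ j, A i j * x j ^ 2 = ∑ i, ∑ j, A i j * x i ^ 2 := by
      rw [Finset.sum_comm]
      refine Finset.sum_congr rfl fun i _ => Finset.sum_congr rfl fun j _ => ?_
      have := hs.apply i j
      rw [this]
    have key : star x ⬝ᵥ (graphLaplacian A) *ᵥ x
        = (1/2) * ∑ i, ∑ j, A i j * (x i - x j) ^ 2 := by
      rw [expand]
      have : ∀ i j : m, A i j * (x i - x j)^2
          = A i j * x i ^2 + A i j * x j ^2 - 2 * (A i j * (x i * x j)) := by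
        intro i j; ring
      simp only [this, Finset.sum_sub_distrib, Finset.sum_add_distrib, ← Finset.mul_sum, hswap]
      ring
    rw [key]
    refine mul_nonneg (by norm_num) (Finset.sum_nonneg fun i _ => Finset.sum_nonneg fun j _ => ?_)
    exact mul_nonneg (hn i j) (sq_nonneg _)

lemma posSemidef_kronecker' {m n : Type*} [Fintype m] [Fintype n] [DecidableEq m] [DecidableEq n]
    {S : Matrix m m ℝ} {G : Matrix n n ℝ} (hS : S.PosSemidef) (hG : G.PosSemidef) :
    (S ⊗ₖ G).PosSemidef := by
  exact hS.kronecker hG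

lemma smul_posSemidef' {m : Type*} [Fintype m] {S : Matrix m m ℝ} (hS : S.PosSemidef)
    {β : ℝ} (hβ : 0 ≤ β) : (β • S).PosSemidef := by
  rw [posSemidef_iff_dotProduct_mulVec]
  constructor
  · show _ = _
    ext i j
    have := congrFun (congrFun hS.1 i) j
    simp only [Matrix.conjTranspose_apply, star_trivial, Matrix.smul_apply, smul_eq_mul] at this ⊢
    rw [this]
  · intro x
    rw [Matrix.smul_mulVec, dotProduct_smul]
    exact smul_nonneg hβ (hS.dotProduct_mulVec_nonneg x)

lemma smul_one_posDef' {m : Type*} [Fintype m] [DecidableEq m] {α : ℝ} (hα : 0 < α) :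
    (α • (1 : Matrix m m ℝ)).PosDef := by
  have : α • (1 : Matrix m m ℝ) = Matrix.diagonal (fun _ => α) := by
    ext i j
    simp [Matrix.one_apply, Matrix.diagonal_apply, mul_ite]
  rw [this]
  exact Matrix.posDef_diagonal_iff.mpr fun _ => hα

lemma conjT_eq_transpose {m n : Type*} (Φ : Matrix m n ℝ) : Φᴴ = Φᵀ := by
  ext i j; simp [Matrix.conjTranspose_apply]


/-- (Corollary 1) If the incoming node is disconnected (`a = 0`), then
`vec Ŵ_{M+1} = [vec Ŵ_M ; (ΦᵀΦ + α I_K)⁻¹ Φᵀ t̲]`: the coefficients for the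
original `M` nodes are unchanged, and the coefficients for the new node equal
the ridge-regression solution on its own data. -/
theorem lrg_disconnected_node (N K M : ℕ) (Φ : Matrix (Fin N) (Fin K) ℝ)
    (α β : ℝ) (hα : 0 < α) (hβ : 0 ≤ β)
    (TM : Matrix (Fin N) (Fin M) ℝ) (t : Fin N → ℝ)
    (A : Matrix (Fin M) (Fin M) ℝ)
    (hsymm : A.IsSymm) (hnonneg : ∀ i j, 0 ≤ A i j) (hdiag : ∀ i, A i i = 0)
    (a : Fin M → ℝ) (ha0 : a = 0)
    (A' : Matrix (Fin M ⊕ Unit) (Fin M ⊕ Unit) ℝ)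
    (hA' : A' = Matrix.fromBlocks A
      (Matrix.of fun i (_ : Unit) => a i) (Matrix.of fun (_ : Unit) j => a j) 0)
    (TM1 : Matrix (Fin N) (Fin M ⊕ Unit) ℝ)
    (hTM1 : TM1 = Matrix.of fun n => Sum.elim (fun j => TM n j) (fun _ => t n))
    (FM : Matrix (Fin M × Fin K) (Fin M × Fin K) ℝ)
    (hFM : FM = (1 + β • graphLaplacian A) ⊗ₖ (Φᵀ * Φ) + α • 1)
    (FM1 : Matrix ((Fin M ⊕ Unit) × Fin K) ((Fin M ⊕ Unit) × Fin K) ℝ)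
    (hFM1 : FM1 = (1 + β • graphLaplacian A') ⊗ₖ (Φᵀ * Φ) + α • 1)
    (WM : Matrix (Fin K) (Fin M) ℝ)
    (hWM : _root_.vec WM
      = FM⁻¹.mulVec (((1 : Matrix (Fin M) (Fin M) ℝ) ⊗ₖ Φᵀ).mulVec (_root_.vec TM)))
    (WM1 : Matrix (Fin K) (Fin M ⊕ Unit) ℝ)
    (hWM1 : _root_.vec WM1
      = FM1⁻¹.mulVec
          (((1 : Matrix (Fin M ⊕ Unit) (Fin M ⊕ Unit) ℝ) ⊗ₖ Φᵀ).mulVec (_root_.vec TM1))) :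
    _root_.vec WM1 = fun p => Sum.elim
      (_root_.vec WM)
      ((Φᵀ * Φ + α • 1)⁻¹.mulVec (Φᵀ.mulVec t))
      (blockEquiv M K p) := by
  subst ha0 hA' hTM1
  set G : Matrix (Fin K) (Fin K) ℝ := Φᵀ * Φ with hG
  set R : Matrix (Fin K) (Fin K) ℝ := G + α • 1 with hR
  set L : Matrix (Fin M) (Fin M) ℝ := graphLaplacian A with hL
  set e := blockEquiv M K with he
  set f := blockEquiv M N with hf
  -- the expanded Laplacian is block diagonal
  have hL' : graphLaplacian (Matrix.fromBlocks A
      (Matrix.of fun i (_ : Unit) => (0 : Fin M → ℝ) i)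
      (Matrix.of fun (_ : Unit) j => (0 : Fin M → ℝ) j) 0)
      = Matrix.fromBlocks L 0 0 0 := by
    ext s s'
    rcases s with i | u <;> rcases s' with j | v <;>
      simp [hL, graphLaplacian, Matrix.diagonal_apply, Matrix.sub_apply, Fintype.sum_sum_type,
        Matrix.fromBlocks_apply₁₁, Matrix.fromBlocks_apply₁₂, Matrix.fromBlocks_apply₂₁,
        Matrix.fromBlocks_apply₂₂, Sum.inl.injEq, Sum.inr.injEq]
  have hS' : (1 : Matrix (Fin M ⊕ Unit) (Fin M ⊕ Unit) ℝ) + β • graphLaplacian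
      (Matrix.fromBlocks A (Matrix.of fun i (_ : Unit) => (0 : Fin M → ℝ) i)
        (Matrix.of fun (_ : Unit) j => (0 : Fin M → ℝ) j) 0)
      = Matrix.fromBlocks (1 + β • L) 0 0 1 := by
    rw [hL', ← Matrix.fromBlocks_one, Matrix.fromBlocks_smul, Matrix.fromBlocks_add]
    simp
  have hFM1' : FM1 = (Matrix.fromBlocks (1 + β • L) 0 0 1) ⊗ₖ G + α • 1 := by
    rw [hFM1, hS']
  -- block structure of FM1
  have hBig1 : FM1.submatrix e.symm e.symm = Matrix.fromBlocks FM 0 0 R := by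
    ext p q
    rcases p with ⟨i, k⟩ | k <;> rcases q with ⟨j, l⟩ | l <;>
      simp [hFM1', hFM, he, blockEquiv, Matrix.submatrix_apply, Matrix.add_apply,
        Matrix.kroneckerMap_apply, Matrix.fromBlocks_apply₁₁, Matrix.fromBlocks_apply₁₂,
        Matrix.fromBlocks_apply₂₁, Matrix.fromBlocks_apply₂₂, Matrix.smul_apply,
        Matrix.one_apply, Prod.ext_iff, hR]
  -- block structure of the big (1 ⊗ₖ Φᵀ)
  have hBig2 : ((1 : Matrix (Fin M ⊕ Unit) (Fin M ⊕ Unit) ℝ) ⊗ₖ Φᵀ).submatrix e.symm f.symm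
      = Matrix.fromBlocks ((1 : Matrix (Fin M) (Fin M) ℝ) ⊗ₖ Φᵀ) 0 0 Φᵀ := by
    ext p q
    rcases p with ⟨i, k⟩ | k <;> rcases q with ⟨j, n⟩ | n <;>
      simp [he, hf, blockEquiv, Matrix.submatrix_apply, Matrix.kroneckerMap_apply,
        Matrix.fromBlocks_apply₁₁, Matrix.fromBlocks_apply₁₂, Matrix.fromBlocks_apply₂₁,
        Matrix.fromBlocks_apply₂₂, Matrix.one_apply]
  -- the reindexed target vector
  have hvecT : (_root_.vec (Matrix.of fun n => Sum.elim (fun j => TM n j) (fun _ => t n))) ∘ ⇑f.symm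
      = Sum.elim (_root_.vec TM) t := by
    funext p
    rcases p with ⟨j, n⟩ | n <;> rfl
  -- positive definiteness and invertibility
  have hGpsd : G.PosSemidef := by
    have := Matrix.posSemidef_conjTranspose_mul_self (R := ℝ) Φ
    rwa [conjT_eq_transpose] at this
  have hSpsd : ((1 : Matrix (Fin M) (Fin M) ℝ) + β • L).PosSemidef :=
    Matrix.PosSemidef.one.add (smul_posSemidef' (graphLaplacian_posSemidef A hsymm hnonneg) hβ)
  have hFMpd : FM.PosDef := by
    rw [hFM]
    exact Matrix.PosDef.posSemidef_add (posSemidef_kronecker' hSpsd hGpsd) (smul_one_posDef' hα)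
  have hRpd : R.PosDef :=
    Matrix.PosDef.posSemidef_add hGpsd (smul_one_posDef' hα)
  have hinv : (Matrix.fromBlocks FM 0 0 R)⁻¹ = Matrix.fromBlocks FM⁻¹ 0 0 R⁻¹ := by
    rw [Matrix.inv_fromBlocks_zero₂₁_of_isUnit_iff _ _ _
      (iff_of_true hFMpd.isUnit hRpd.isUnit)]
    simp
  -- main computation
  have key : _root_.vec WM1 ∘ ⇑e.symm
      = Sum.elim (_root_.vec WM) (R⁻¹.mulVec (Φᵀ.mulVec t)) := by
    have hw : (((1 : Matrix (Fin M ⊕ Unit) (Fin M ⊕ Unit) ℝ) ⊗ₖ Φᵀ).mulVec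
        (_root_.vec (Matrix.of fun n => Sum.elim (fun j => TM n j) (fun _ => t n)))) ∘ ⇑e.symm
        = Sum.elim (((1 : Matrix (Fin M) (Fin M) ℝ) ⊗ₖ Φᵀ).mulVec (_root_.vec TM)) (Φᵀ.mulVec t) := by
      have h := Matrix.submatrix_mulVec_equiv
        ((1 : Matrix (Fin M ⊕ Unit) (Fin M ⊕ Unit) ℝ) ⊗ₖ Φᵀ)
        ((_root_.vec (Matrix.of fun n => Sum.elim (fun j => TM n j) (fun _ => t n))) ∘ ⇑f.symm)
        (⇑e.symm) f.symm
      rw [hBig2, hvecT] at h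
      have hcomp : (Sum.elim (_root_.vec TM) t) ∘ ⇑f.symm.symm
          = _root_.vec (Matrix.of fun n => Sum.elim (fun j => TM n j) (fun _ => t n)) := by
        rw [← hvecT]
        funext x
        simp
      rw [hcomp] at h
      rw [← h, Matrix.fromBlocks_mulVec]
      simp
    rw [hWM1]
    have h := Matrix.submatrix_mulVec_equiv FM1⁻¹
      ((((1 : Matrix (Fin M ⊕ Unit) (Fin M ⊕ Unit) ℝ) ⊗ₖ Φᵀ).mulVec
        (_root_.vec (Matrix.of fun n => Sum.elim (fun j => TM n j) (fun _ => t n)))) ∘ ⇑e.symm)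
      (⇑e.symm) e.symm
    have hsub : FM1⁻¹.submatrix ⇑e.symm ⇑e.symm = Matrix.fromBlocks FM⁻¹ 0 0 R⁻¹ := by
      have := Matrix.inv_submatrix_equiv FM1 e.symm e.symm
      rw [hBig1] at this
      rw [← this, hinv]
    rw [hsub, hw] at h
    have hcomp2 : (Sum.elim (((1 : Matrix (Fin M) (Fin M) ℝ) ⊗ₖ Φᵀ).mulVec (_root_.vec TM))
        (Φᵀ.mulVec t)) ∘ ⇑e.symm.symm
        = (((1 : Matrix (Fin M ⊕ Unit) (Fin M ⊕ Unit) ℝ) ⊗ₖ Φᵀ).mulVec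
          (_root_.vec (Matrix.of fun n => Sum.elim (fun j => TM n j) (fun _ => t n)))) := by
      rw [← hw]
      funext x
      simp
    rw [hcomp2] at h
    rw [← h, Matrix.fromBlocks_mulVec]
    simp [hWM]
  funext p
  have hp : _root_.vec WM1 p = (_root_.vec WM1 ∘ ⇑e.symm) (e p) := by simp
  rw [hp, key]
end
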